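/- For generic x ∈ ℝ (i.e., for all x in a dense Gδ set), 1/2 is a limit point of the sequence s(n,x)/π(n), where s(n,x) = Σ_{k=1}^n sin²(x(k-1)!/k) and π(n) is the prime counting function. -/

import Mathlib

noncomputable def s (n : ℕ) (x : ℝ) : ℝ :=
  ∑ k ∈ Finset.Icc 1 n, Real.sin (x * (k - 1).factorial / k) ^ 2

open Filter Finset Real

noncomputable def phi19 (k : ℕ) : ℝ := if Nat.Prime k then π/4 else 0


noncomputable def c19 (k : ℕ) : ℝ := ((k - 1).factorial : ℝ) / k

noncomputable def l19 (k : ℕ) : ℝ := 8 / ((k - 1).factorial : ℝ)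

lemma c19_pos {k : ℕ} (hk : 1 ≤ k) : 0 < c19 k := by
  have : (0:ℝ) < k := by exact_mod_cast hk
  exact div_pos (by exact_mod_cast (k-1).factorial_pos) this

lemma l19_pos (k : ℕ) : 0 < l19 k :=
  div_pos (by norm_num) (by exact_mod_cast (k-1).factorial_pos)

lemma mul_c19 (k : ℕ) (hk : 1 ≤ k) : (k : ℝ) * c19 k = ((k-1).factorial : ℝ) := by
  have hk' : (k:ℝ) ≠ 0 := by
    have : (0:ℝ) < k := by exact_mod_cast hk
    linarith
  rw [c19]; field_simp

lemma abs_cos_sub_cos_le (a b : ℝ) : |Real.cos a - Real.cos b| ≤ |a - b| := by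
  rw [Real.cos_sub_cos]
  calc |(-2) * sin ((a+b)/2) * sin ((a-b)/2)| = 2 * (|sin ((a+b)/2)| * |sin ((a-b)/2)|) := by
        rw [abs_mul, abs_mul]; norm_num; ring
    _ ≤ 2 * (1 * |(a-b)/2|) := by
        have := mul_le_mul (Real.abs_sin_le_one ((a+b)/2)) (Real.abs_sin_le_abs (x := (a-b)/2))
          (abs_nonneg _) (by norm_num)
        linarith
    _ = 2 * (1 * (|a-b|/2)) := by rw [abs_div]; norm_num
    _ = |a - b| := by ring

lemma sin_sq_lip (a b : ℝ) : |Real.sin a ^ 2 - Real.sin b ^ 2| ≤ |a - b| := by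
  rw [Real.sin_sq_eq_half_sub, Real.sin_sq_eq_half_sub]
  have h := _root_.abs_cos_sub_cos_le (2*b) (2*a)
  have e : 1/2 - cos (2*a)/2 - (1/2 - cos (2*b)/2) = (cos (2*b) - cos (2*a))/2 := by ring
  rw [e, abs_div]
  rw [show (2*b - 2*a) = 2*(b-a) by ring, abs_mul, abs_sub_comm b a] at h
  have h2 : |(2:ℝ)| = 2 := by norm_num
  rw [h2] at h
  calc |cos (2*b) - cos (2*a)| / |(2:ℝ)| ≤ (2 * |a-b|) / |(2:ℝ)| := by gcongr
    _ = |a - b| := by rw [h2]; ring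

lemma sin_sq_shift (m : ℤ) (t : ℝ) : Real.sin (m * π + t) ^ 2 = Real.sin t ^ 2 := by
  rw [add_comm, Real.sin_add_int_mul_pi, mul_pow]
  have : ((-1:ℝ) ^ m) ^ 2 = 1 := by
    rcases Int.even_or_odd m with he | ho
    · rw [he.neg_one_zpow]; norm_num
    · rw [Odd.neg_one_zpow ho]; norm_num
  rw [this, one_mul]

lemma sin_sq_pi4 : Real.sin (π/4) ^ 2 = 1/2 := by
  rw [Real.sin_pi_div_four]
  rw [div_pow, Real.sq_sqrt (by norm_num : (2:ℝ) ≥ 0)]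
  norm_num
-- key gap inequality : π / c19 k + l19 k ≤ l19 (k-1)  for k ≥ 16
lemma gap19 {k : ℕ} (hk : 16 ≤ k) : π / c19 k + l19 k ≤ l19 (k - 1) := by
  have h1 : 1 ≤ k := by omega
  have hc := c19_pos h1
  have hfact : ((k-1).factorial : ℝ) = (k-1) * ((k-1-1).factorial : ℝ) := by
    have : k - 1 = (k - 2) + 1 := by omega
    rw [show k - 1 - 1 = k - 2 by omega, this, Nat.factorial_succ]
    push_cast [Nat.cast_sub (show 2 ≤ k by omega)]
    ring
  have hπ : π ≤ 4 := by linarith [Real.pi_le_four]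
  -- π / c19 k = π * k / (k-1)!
  have hck : c19 k = ((k-1).factorial : ℝ) / k := rfl
  have hkR : (0:ℝ) < k := by exact_mod_cast h1
  have hfpos : (0:ℝ) < ((k-1).factorial : ℝ) := by exact_mod_cast (k-1).factorial_pos
  have hfpos2 : (0:ℝ) < ((k-1-1).factorial : ℝ) := by exact_mod_cast (k-1-1).factorial_pos
  have hk1 : (16:ℝ) ≤ (k:ℝ) := by exact_mod_cast hk
  rw [hck, div_div_eq_mul_div, l19, l19, hfact, ← add_div,
    div_le_div_iff₀ (mul_pos (by linarith) hfpos2) hfpos2]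
  nlinarith [Real.pi_le_four, hfpos2, hkR]

lemma step19 (k : ℕ) (hk : 16 ≤ k) (a t : ℝ) :
    ∃ b : ℝ, a ≤ b ∧ b + l19 k ≤ a + l19 (k-1) ∧
      ∃ m : ℤ, ∀ y ∈ Set.Icc b (b + l19 k), |y * c19 k - (m * π + t)| ≤ 4 / k := by
  have h1 : 1 ≤ k := by omega
  have hc := c19_pos h1
  have hπ := Real.pi_pos
  set m : ℤ := ⌈(a * c19 k - t + 4/k) / π⌉ with hm
  refine ⟨(m * π + t - 4/k) / c19 k, ?_, ?_, m, ?_⟩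
  · have h2 : (a * c19 k - t + 4/k) / π ≤ m := Int.le_ceil _
    have h3 : a * c19 k - t + 4/k ≤ m * π := by
      rw [div_le_iff₀ hπ] at h2; linarith
    rw [le_div_iff₀ hc]
    linarith
  · have h2 : (m:ℝ) < (a * c19 k - t + 4/k) / π + 1 := Int.ceil_lt_add_one _
    have h3 : (m:ℝ) * π < a * c19 k - t + 4/k + π := by
      rw [div_add' _ _ _ (ne_of_gt hπ), lt_div_iff₀ hπ] at h2
      calc (m:ℝ) * π < (a * c19 k - t + 4/k + π) := by nlinarith
        _ = _ := by ring
    have hb : (m * π + t - 4/k) / c19 k < a + π / c19 k := by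
      rw [div_lt_iff₀ hc]
      have : (a + π / c19 k) * c19 k = a * c19 k + π := by field_simp
      rw [this]; linarith
    have := gap19 hk
    linarith
  · intro y hy
    obtain ⟨hy1, hy2⟩ := hy
    have hl : l19 k * c19 k = 8 / k := by
      rw [l19, c19]
      rw [div_mul_div_comm, mul_comm (8:ℝ),
        mul_div_mul_left _ _ (ne_of_gt (show (0:ℝ) < ((k-1).factorial :ℝ) by exact_mod_cast (k-1).factorial_pos))]
    have e1 : (m * π + t - 4/k) / c19 k * c19 k = m * π + t - 4/k := div_mul_cancel₀ _ (ne_of_gt hc)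
    have l1 : m * π + t - 4/k ≤ y * c19 k := by
      calc m * π + t - 4/k = (m * π + t - 4/k) / c19 k * c19 k := e1.symm
        _ ≤ y * c19 k := by gcongr
    have l2 : y * c19 k ≤ m * π + t + 4/k := by
      calc y * c19 k ≤ ((m * π + t - 4/k) / c19 k + l19 k) * c19 k := by gcongr
        _ = m * π + t - 4/k + l19 k * c19 k := by rw [add_mul, e1]
        _ = m * π + t - 4/k + 8/k := by rw [hl]
        _ = m * π + t + 4/k := by ring
    rw [abs_le]
    constructor <;> [linarith; linarith]
lemma exists_good (K : ℕ) (hK : 16 ≤ K) (x₀ : ℝ) :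
    ∃ x : ℝ, x₀ ≤ x ∧ x ≤ x₀ + l19 (K-1) ∧
      ∀ k, K ≤ k → ∃ m : ℤ, |x * c19 k - (m * π + phi19 k)| ≤ 4 / k := by
  have h : ∀ (j : ℕ) (a : ℝ), ∃ b : ℝ, a ≤ b ∧ b + l19 (K+j) ≤ a + l19 (K+j-1) ∧
      ∃ m : ℤ, ∀ y ∈ Set.Icc b (b + l19 (K+j)), |y * c19 (K+j) - (m * π + phi19 (K+j))| ≤ 4 / ((K+j : ℕ) : ℝ) :=
    fun j a => step19 (K+j) (by omega) a (phi19 (K+j))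
  choose g h1 h2 h3 using h
  set A : ℕ → ℝ := fun j => Nat.rec x₀ (fun j a => g j a) j with hA
  have hA0 : A 0 = x₀ := rfl
  have hAsucc : ∀ j, A (j+1) = g j (A j) := fun j => rfl
  -- monotone
  have hmono : Monotone A := by
    apply monotone_nat_of_le_succ
    intro j; rw [hAsucc]; exact h1 j (A j)
  -- right endpoints
  set E : ℕ → ℝ := fun j => A j + l19 (K+j-1) with hE
  have hEanti : Antitone E := by
    apply antitone_nat_of_succ_le
    intro j
    have := h2 j (A j)
    rw [← hAsucc] at this
    simpa [hE, show K + (j+1) - 1 = K + j by omega] using this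
  have hAE : ∀ j, A j ≤ E j := fun j => le_add_of_nonneg_right (l19_pos _).le
  have hub : ∀ i j, A i ≤ E j := by
    intro i j
    rcases le_total i j with h' | h'
    · exact (hmono h').trans (hAE j)
    · exact (hAE i).trans (hEanti h')
  have hbdd : BddAbove (Set.range A) := ⟨E 0, by rintro _ ⟨i, rfl⟩; exact hub i 0⟩
  set x := sSup (Set.range A) with hx
  have hxge : ∀ j, A j ≤ x := fun j => le_csSup hbdd ⟨j, rfl⟩
  have hxle : ∀ j, x ≤ E j := fun j => csSup_le (Set.range_nonempty A) (by rintro _ ⟨i, rfl⟩; exact hub i j)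
  refine ⟨x, by simpa [hA0] using hxge 0, ?_, ?_⟩
  · have := hxle 0
    simpa [hE, hA0] using this
  · intro k hk
    obtain ⟨j, rfl⟩ : ∃ j, K + j = k := ⟨k - K, by omega⟩
    obtain ⟨m, hm⟩ := h3 j (A j)
    refine ⟨m, ?_⟩
    apply hm
    constructor
    · rw [← hAsucc]; exact hxge (j+1)
    · rw [← hAsucc]
      have := hxle (j+1)
      simpa [hE, show K + (j+1) - 1 = K + j by omega] using this

lemma pi_eq_Q (n : ℕ) :
    Nat.primeCounting n = ((Finset.Icc 1 n).filter Nat.Prime).card := by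
  rw [Nat.primeCounting, Nat.primeCounting', Nat.count_eq_card_filter_range]
  congr 1
  ext a
  simp only [Finset.mem_filter, Finset.mem_range, Finset.mem_Icc]
  constructor
  · rintro ⟨h1, h2⟩; exact ⟨⟨h2.one_lt.le.trans (le_refl _) |>.trans' (by omega), by omega⟩, h2⟩
  · rintro ⟨⟨h1, h2⟩, h3⟩; exact ⟨by omega, h3⟩

lemma Icc_succ (n : ℕ) : Finset.Icc 1 (n+1) = insert (n+1) (Finset.Icc 1 n) := by
  ext a; simp only [Finset.mem_Icc, Finset.mem_insert]; omega

lemma sqrt_step (m n : ℕ) (hmn : m ≤ n) :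
    1/((n:ℝ)+1) ≤ 2*(Real.sqrt ((m:ℝ)+1) - Real.sqrt m) := by
  set u := Real.sqrt m with hu'
  set v := Real.sqrt ((m:ℝ)+1) with hv'
  have hu : 0 ≤ u := Real.sqrt_nonneg _
  have hu2 : u^2 = m := Real.sq_sqrt (by positivity)
  have hv2 : v^2 = (m:ℝ)+1 := Real.sq_sqrt (by positivity)
  have hv1 : 1 ≤ v := by
    nlinarith [Real.sqrt_nonneg ((m:ℝ)+1), Nat.cast_nonneg (α := ℝ) m]
  have hv0 : 0 < v := lt_of_lt_of_le one_pos hv1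
  have key : (u*v)^2 ≤ ((m:ℝ)+1/2)^2 := by
    rw [mul_pow, hu2, hv2]; nlinarith [Nat.cast_nonneg (α := ℝ) m]
  have huv : u*v ≤ (m:ℝ)+1/2 := by
    nlinarith [mul_nonneg hu hv0.le, Nat.cast_nonneg (α := ℝ) m]
  have hv3 : v^3 = ((m:ℝ)+1)*v := by rw [pow_succ, hv2, mul_comm]
  have h5 : u*v^2 ≤ ((m:ℝ)+1/2)*v := by
    calc u*v^2 = (u*v)*v := by ring
      _ ≤ ((m:ℝ)+1/2)*v := by exact mul_le_mul_of_nonneg_right huv hv0.le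
  have hmain : 1 ≤ 2*(v-u)*v^2 := by
    have : 2*(v-u)*v^2 = 2*v^3 - 2*(u*v^2) := by ring
    rw [this, hv3]
    nlinarith
  have hnm : ((m:ℝ)+1) ≤ (n:ℝ)+1 := by
    have : (m:ℝ) ≤ n := by exact_mod_cast hmn
    linarith
  have h6 : 1/((n:ℝ)+1) ≤ 1/((m:ℝ)+1) := by
    apply div_le_div_of_nonneg_left (by norm_num) (by positivity) hnm
  refine h6.trans ?_
  rw [div_le_iff₀ (by positivity)]
  calc (1:ℝ) ≤ 2*(v-u)*v^2 := hmain
    _ = 2*(v-u)*((m:ℝ)+1) := by rw [hv2]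
  
lemma primeharm (n : ℕ) :
    ∑ k ∈ (Finset.Icc 1 n).filter Nat.Prime, (1/(k:ℝ)) ≤
      2 * Real.sqrt (((Finset.Icc 1 n).filter Nat.Prime).card) := by
  induction n with
  | zero => simp
  | succ n ih =>
    rw [Icc_succ, Finset.filter_insert]
    by_cases hp : Nat.Prime (n+1)
    · rw [if_pos hp]
      have hnot : (n+1) ∉ (Finset.Icc 1 n).filter Nat.Prime := by
        simp only [Finset.mem_filter, Finset.mem_Icc]; omega
      rw [Finset.sum_insert hnot, Finset.card_insert_of_notMem hnot]
      set m := ((Finset.Icc 1 n).filter Nat.Prime).card with hm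
      have hmn : m ≤ n := by
        calc m ≤ (Finset.Icc 1 n).card := Finset.card_filter_le _ _
          _ = n := by rw [Nat.card_Icc]; omega
      have := sqrt_step m n hmn
      push_cast
      have h7 : (1:ℝ)/((n:ℝ)+1) ≤ 2*(Real.sqrt ((m:ℝ)+1) - Real.sqrt m) := this
      calc 1/((n:ℝ)+1) + ∑ k ∈ (Finset.Icc 1 n).filter Nat.Prime, (1/(k:ℝ))
          ≤ 2*(Real.sqrt ((m:ℝ)+1) - Real.sqrt m) + 2*Real.sqrt m := by
            push_cast at ih; linarith
        _ = 2*Real.sqrt ((m:ℝ)+1) := by ring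
    · rw [if_neg hp]; exact ih

lemma sqsum (n : ℕ) : ∑ k ∈ Finset.Icc 1 n, (1:ℝ)/(k:ℝ)^2 ≤ 2 := by
  have main : ∀ n : ℕ, 1 ≤ n → ∑ k ∈ Finset.Icc 1 n, (1:ℝ)/(k:ℝ)^2 ≤ 2 - 1/(n:ℝ) := by
    intro n hn
    induction n, hn using Nat.le_induction with
    | base => norm_num
    | succ n hn ih =>
      rw [Finset.sum_Icc_succ_top (by omega)]
      have hn1 : (1:ℝ) ≤ (n:ℝ) := by exact_mod_cast hn
      have h1 : (1:ℝ)/((n:ℝ)+1)^2 ≤ 1/((n:ℝ)*((n:ℝ)+1)) := by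
        apply div_le_div_of_nonneg_left (by norm_num) (by positivity)
        nlinarith
      have h2 : (1:ℝ)/((n:ℝ)*((n:ℝ)+1)) = 1/(n:ℝ) - 1/((n:ℝ)+1) := by
        field_simp
        try ring
      push_cast
      linarith [ih]
  rcases Nat.eq_zero_or_pos n with rfl | hn
  · simp
  · have := main n hn
    have : (0:ℝ) < 1/(n:ℝ) := by positivity
    linarith [main n hn]
lemma tendsto_of_good (K : ℕ) (hK : 16 ≤ K) (x : ℝ)
    (hx : ∀ k, K ≤ k → ∃ m : ℤ, |x * c19 k - (m * π + phi19 k)| ≤ 4 / k) :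
    Filter.Tendsto (fun n : ℕ => s n x / (Nat.primeCounting n : ℝ))
      Filter.atTop (nhds (1/2)) := by
  classical
  set Q : ℕ → ℕ := fun n => ((Finset.Icc 1 n).filter Nat.Prime).card with hQ
  set D : ℕ → ℝ := fun k => Real.sin (x * ((k-1).factorial : ℝ) / k) ^ 2 -
    (if Nat.Prime k then (1:ℝ)/2 else 0) with hD
  have hterm : ∀ k, K ≤ k → |D k| ≤ (if Nat.Prime k then 4/(k:ℝ) else 16/(k:ℝ)^2) := by
    intro k hk
    obtain ⟨m, hm⟩ := hx k hk
    have hxc : x * ((k-1).factorial : ℝ) / k = x * c19 k := by rw [c19, mul_div_assoc]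
    by_cases hp : Nat.Prime k
    · simp only [hD, if_pos hp]
      rw [hxc]
      have h12 : Real.sin ((m:ℝ) * π + π/4) ^ 2 = 1/2 := by rw [sin_sq_shift, sin_sq_pi4]
      rw [phi19, if_pos hp] at hm
      calc |Real.sin (x * c19 k)^2 - 1/2|
          = |Real.sin (x * c19 k)^2 - Real.sin ((m:ℝ)*π + π/4)^2| := by rw [h12]
        _ ≤ |x * c19 k - ((m:ℝ)*π + π/4)| := sin_sq_lip _ _
        _ ≤ 4/k := hm
    · simp only [hD, if_neg hp]
      rw [hxc, sub_zero]
      rw [phi19, if_neg hp, add_zero] at hm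
      have e : Real.sin (x * c19 k) ^2 = Real.sin (x * c19 k - m*π)^2 := by
        conv_lhs => rw [show x * c19 k = (m:ℝ)*π + (x * c19 k - m*π) by ring]
        rw [sin_sq_shift]
      rw [abs_of_nonneg (sq_nonneg _), e]
      calc Real.sin (x*c19 k - m*π)^2 ≤ (x*c19 k - m*π)^2 := Real.sin_sq_le_sq
        _ = |x*c19 k - m*π|^2 := (sq_abs _).symm
        _ ≤ (4/(k:ℝ))^2 := by gcongr <;> exact abs_nonneg _
        _ = 16/(k:ℝ)^2 := by rw [div_pow]; norm_num
  have hDle1 : ∀ k, |D k| ≤ 1 := by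
    intro k
    have h1 := Real.sin_sq_le_one (x * ((k-1).factorial : ℝ) / k)
    have h2 := sq_nonneg (Real.sin (x * ((k-1).factorial : ℝ) / k))
    by_cases hp : Nat.Prime k
    · rw [hD]; simp only [if_pos hp]; rw [abs_le]; constructor <;> nlinarith
    · rw [hD]; simp only [if_neg hp]; rw [abs_le]; constructor <;> nlinarith
  have hsum : ∀ n : ℕ, |s n x - (Q n : ℝ)/2| ≤ (2*K + 32) + 8 * Real.sqrt (Q n) := by
    intro n
    have e1 : s n x - (Q n : ℝ)/2 = ∑ k ∈ Finset.Icc 1 n, D k := by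
      rw [s, hD, Finset.sum_sub_distrib]
      congr 1
      rw [← Finset.sum_filter, Finset.sum_const, nsmul_eq_mul, hQ]
      ring
    have habs : |∑ k ∈ Finset.Icc 1 n, D k| ≤ ∑ k ∈ Finset.Icc 1 n, |D k| :=
      Finset.abs_sum_le_sum_abs _ _
    have hsplit : ∑ k ∈ Finset.Icc 1 n, |D k| =
        ∑ k ∈ (Finset.Icc 1 n).filter (fun k => K ≤ k), |D k| +
        ∑ k ∈ (Finset.Icc 1 n).filter (fun k => ¬ K ≤ k), |D k| :=
      (Finset.sum_filter_add_sum_filter_not _ _ _).symm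
    have hsmall : ∑ k ∈ (Finset.Icc 1 n).filter (fun k => ¬ K ≤ k), |D k| ≤ (K:ℝ) := by
      calc ∑ k ∈ (Finset.Icc 1 n).filter (fun k => ¬ K ≤ k), |D k|
          ≤ ∑ k ∈ (Finset.Icc 1 n).filter (fun k => ¬ K ≤ k), 1 :=
            Finset.sum_le_sum (fun k _ => hDle1 k)
        _ = ((Finset.Icc 1 n).filter (fun k => ¬ K ≤ k)).card := by
            rw [Finset.sum_const, nsmul_eq_mul, mul_one]
        _ ≤ (K:ℝ) := by
            have hsub : (Finset.Icc 1 n).filter (fun k => ¬ K ≤ k) ⊆ Finset.Icc 1 K := by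
              intro a ha
              simp only [Finset.mem_filter, Finset.mem_Icc] at ha ⊢
              omega
            have := Finset.card_le_card hsub
            have h2 : (Finset.Icc 1 K).card = K := by rw [Nat.card_Icc]; omega
            exact_mod_cast (h2 ▸ this : _ ≤ K)
    have hbig : ∑ k ∈ (Finset.Icc 1 n).filter (fun k => K ≤ k), |D k| ≤
        ∑ k ∈ Finset.Icc 1 n, (if Nat.Prime k then 4/(k:ℝ) else 16/(k:ℝ)^2) := by
      calc ∑ k ∈ (Finset.Icc 1 n).filter (fun k => K ≤ k), |D k|
          ≤ ∑ k ∈ (Finset.Icc 1 n).filter (fun k => K ≤ k),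
              (if Nat.Prime k then 4/(k:ℝ) else 16/(k:ℝ)^2) :=
            Finset.sum_le_sum (fun k hk => hterm k (Finset.mem_filter.1 hk).2)
        _ ≤ _ := by
            apply Finset.sum_le_sum_of_subset_of_nonneg (Finset.filter_subset _ _)
            intro k hk _
            by_cases hp : Nat.Prime k <;> simp only [if_pos, if_neg, hp] <;> positivity
    have hsplit2 : ∑ k ∈ Finset.Icc 1 n, (if Nat.Prime k then 4/(k:ℝ) else 16/(k:ℝ)^2) =
        ∑ k ∈ (Finset.Icc 1 n).filter Nat.Prime, 4/(k:ℝ) +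
        ∑ k ∈ (Finset.Icc 1 n).filter (fun k => ¬ Nat.Prime k), 16/(k:ℝ)^2 := by
      rw [← Finset.sum_filter_add_sum_filter_not (Finset.Icc 1 n) Nat.Prime]
      congr 1
      · exact Finset.sum_congr rfl (fun k hk => if_pos (Finset.mem_filter.1 hk).2)
      · exact Finset.sum_congr rfl (fun k hk => if_neg (Finset.mem_filter.1 hk).2)
    have hprime : ∑ k ∈ (Finset.Icc 1 n).filter Nat.Prime, 4/(k:ℝ) ≤
        8 * Real.sqrt (Q n) := by
      have : ∑ k ∈ (Finset.Icc 1 n).filter Nat.Prime, 4/(k:ℝ) =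
          4 * ∑ k ∈ (Finset.Icc 1 n).filter Nat.Prime, 1/(k:ℝ) := by
        rw [Finset.mul_sum]
        exact Finset.sum_congr rfl (fun k _ => by rw [← mul_one_div])
      rw [this]
      have := primeharm n
      rw [hQ]
      nlinarith [this]
    have hcomp : ∑ k ∈ (Finset.Icc 1 n).filter (fun k => ¬ Nat.Prime k), 16/(k:ℝ)^2 ≤ 32 := by
      calc ∑ k ∈ (Finset.Icc 1 n).filter (fun k => ¬ Nat.Prime k), 16/(k:ℝ)^2
          ≤ ∑ k ∈ Finset.Icc 1 n, 16/(k:ℝ)^2 := by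
            apply Finset.sum_le_sum_of_subset_of_nonneg (Finset.filter_subset _ _)
            intro k _ _; positivity
        _ = 16 * ∑ k ∈ Finset.Icc 1 n, (1:ℝ)/(k:ℝ)^2 := by
            rw [Finset.mul_sum]
            exact Finset.sum_congr rfl (fun k _ => by rw [← mul_one_div])
        _ ≤ 32 := by nlinarith [sqsum n]
    rw [e1]
    calc |∑ k ∈ Finset.Icc 1 n, D k| ≤ _ := habs
      _ = _ := hsplit
      _ ≤ (2*K + 32) + 8 * Real.sqrt (Q n) := by
          have hbig2 := hbig.trans_eq hsplit2
          have hKK : (0:ℝ) ≤ (K:ℝ) := by positivity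
          linarith [hprime, hcomp, hsmall, hbig2]
  -- limit
  have hsqrtTop : Filter.Tendsto Real.sqrt Filter.atTop Filter.atTop := by
    rw [Filter.tendsto_atTop_atTop]
    intro b
    refine ⟨b^2, fun a ha => ?_⟩
    have h1 : |b| ≤ Real.sqrt a := by
      rw [← Real.sqrt_sq_eq_abs]; exact Real.sqrt_le_sqrt ha
    exact (le_abs_self b).trans h1
  have hQtop : Filter.Tendsto (fun n => ((Q n : ℕ) : ℝ)) Filter.atTop Filter.atTop := by
    have h0 : Filter.Tendsto Nat.primeCounting Filter.atTop Filter.atTop :=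
      Nat.tendsto_primeCounting
    exact tendsto_natCast_atTop_atTop.comp (h0.congr (fun n => pi_eq_Q n))
  have hsqQ : Filter.Tendsto (fun n => Real.sqrt (Q n)) Filter.atTop Filter.atTop :=
    hsqrtTop.comp hQtop
  have hg0 : Filter.Tendsto (fun n => (2*(K:ℝ)+40) / Real.sqrt (Q n))
      Filter.atTop (nhds 0) := Filter.Tendsto.div_atTop tendsto_const_nhds hsqQ
  rw [show (1/2 : ℝ) = 1/2 by rfl]
  rw [← tendsto_sub_nhds_zero_iff]
  apply squeeze_zero_norm' _ hg0
  have hev : ∀ᶠ n in Filter.atTop, 2 ≤ n := Filter.eventually_atTop.2 ⟨2, fun n h => h⟩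
  filter_upwards [hev] with n hn
  have hQ1 : 1 ≤ Q n := by
    rw [hQ]
    apply Finset.card_pos.2
    exact ⟨2, by simp [Finset.mem_filter, Finset.mem_Icc, Nat.prime_two]; omega⟩
  have hQR : (1:ℝ) ≤ (Q n : ℝ) := by exact_mod_cast hQ1
  have hQpos : (0:ℝ) < (Q n : ℝ) := by linarith
  have hsq1 : (1:ℝ) ≤ Real.sqrt (Q n) := by
    rw [show (1:ℝ) = Real.sqrt 1 from (Real.sqrt_one).symm]
    exact Real.sqrt_le_sqrt hQR
  have hsqpos : (0:ℝ) < Real.sqrt (Q n) := by linarith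
  have hsqsq : Real.sqrt (Q n) * Real.sqrt (Q n) = (Q n : ℝ) :=
    Real.mul_self_sqrt (by positivity)
  have hpin : (Nat.primeCounting n : ℝ) = (Q n : ℝ) := by rw [pi_eq_Q n, hQ]
  have ehalf : ((Q n:ℝ)/2)/(Q n:ℝ) = 1/2 := by
    rw [div_div, mul_comm, ← div_div, div_self (ne_of_gt hQpos)]
  have e2 : s n x / (Nat.primeCounting n : ℝ) - 1/2 = (s n x - (Q n : ℝ)/2) / (Q n : ℝ) := by
    rw [hpin, sub_div, ehalf]
  rw [Real.norm_eq_abs, e2, abs_div, abs_of_pos hQpos]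
  rw [div_le_div_iff₀ hQpos hsqpos]
  have hb := hsum n
  have hKK : (0:ℝ) ≤ (K:ℝ) := by positivity
  calc |s n x - (Q n : ℝ)/2| * Real.sqrt (Q n)
      ≤ ((2*K + 32) + 8 * Real.sqrt (Q n)) * Real.sqrt (Q n) := by
        apply mul_le_mul_of_nonneg_right hb hsqpos.le
    _ = (2*K + 32) * Real.sqrt (Q n) + 8 * (Q n : ℝ) := by rw [add_mul, mul_assoc, hsqsq]
    _ ≤ (2*K + 32) * (Q n:ℝ) + 8 * (Q n : ℝ) := by
        have hQs : Real.sqrt (Q n) ≤ (Q n:ℝ) := by nlinarith [hsqsq, hsq1]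
        have h9 : (2*(K:ℝ)+32) * Real.sqrt (Q n) ≤ (2*(K:ℝ)+32) * (Q n:ℝ) :=
          mul_le_mul_of_nonneg_left hQs (by positivity)
        linarith
    _ = (2*(K:ℝ)+40) * (Q n : ℝ) := by ring
lemma dense_good (x₀ δ : ℝ) (hδ : 0 < δ) :
    ∃ x : ℝ, |x - x₀| < δ ∧
      Filter.Tendsto (fun n : ℕ => s n x / (Nat.primeCounting n : ℝ))
        Filter.atTop (nhds (1/2)) := by
  obtain ⟨j, hj⟩ := exists_nat_gt (8/δ)
  set K := max 17 (j + 2) with hKdef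
  have hK16 : 16 ≤ K := by omega
  obtain ⟨x, hx1, hx2, hx3⟩ := exists_good K hK16 x₀
  refine ⟨x, ?_, tendsto_of_good K hK16 x hx3⟩
  have hjpos : 0 < j := by
    by_contra h
    push_neg at h
    interval_cases j
    · simp at hj
      nlinarith [div_pos (by norm_num : (0:ℝ) < 8) hδ]
  have hfac : (j:ℝ) ≤ ((K-1-1).factorial : ℝ) := by
    have h1 : j ≤ K - 1 - 1 := by omega
    have h2 : K - 1 - 1 ≤ (K-1-1).factorial := Nat.self_le_factorial _
    exact_mod_cast h1.trans h2
  have hjR : (0:ℝ) < (j:ℝ) := by exact_mod_cast hjpos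
  have hl : l19 (K-1) < δ := by
    rw [l19]
    have h8 : 8 / δ < (j:ℝ) := hj
    have hfpos : (0:ℝ) < ((K-1-1).factorial : ℝ) := by exact_mod_cast (K-1-1).factorial_pos
    rw [div_lt_iff₀ hfpos]
    rw [div_lt_iff₀ hδ] at h8
    calc (8:ℝ) < j * δ := h8
      _ ≤ ((K-1-1).factorial : ℝ) * δ := by
          apply mul_le_mul_of_nonneg_right hfac hδ.le
      _ = δ * ((K-1-1).factorial : ℝ) := by ring
  rw [abs_lt]
  constructor <;> [linarith; linarith]

theorem stmt_19 :
    ∃ G : Set ℝ, Dense G ∧ IsGδ G ∧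
      ∀ x ∈ G, MapClusterPt (1 / 2 : ℝ) Filter.atTop
        (fun n : ℕ => s n x / (Nat.primeCounting n : ℝ)) := by
  classical
  set U : ℕ × ℕ → Set ℝ := fun p =>
    ⋃ n ∈ {n : ℕ | p.2 ≤ n}, {y : ℝ | |s n y / (Nat.primeCounting n : ℝ) - 1/2| < 1/(p.1+1)}
    with hU
  have hcont : ∀ n : ℕ, Continuous fun y : ℝ => s n y := by
    intro n
    unfold s
    apply continuous_finset_sum
    intro k _
    exact (Real.continuous_sin.comp ((continuous_id.mul continuous_const).div_const _)).pow 2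
  have hopen : ∀ p, IsOpen (U p) := by
    intro p
    apply isOpen_biUnion
    intro n _
    have : Continuous fun y : ℝ => |s n y / (Nat.primeCounting n : ℝ) - 1/2| :=
      (((hcont n).div_const _).sub continuous_const).abs
    exact isOpen_lt this continuous_const
  have hdense : ∀ p, Dense (U p) := by
    intro p
    rw [Metric.dense_iff]
    intro z r hr
    obtain ⟨x, hx1, hx2⟩ := dense_good z r hr
    refine ⟨x, ?_, ?_⟩
    · rw [Metric.mem_ball, Real.dist_eq]; exact hx1
    · have hev : ∀ᶠ n in Filter.atTop,
          |s n x / (Nat.primeCounting n : ℝ) - 1/2| < 1/(p.1+1) := by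
        have h2 := Metric.tendsto_atTop.1 hx2 (1/(p.1+1)) (by positivity)
        obtain ⟨N, hN⟩ := h2
        rw [Filter.eventually_atTop]
        exact ⟨N, fun n hn => by have := hN n hn; rwa [Real.dist_eq] at this⟩
      rw [Filter.eventually_atTop] at hev
      obtain ⟨N, hN⟩ := hev
      rw [hU]
      simp only [Set.mem_iUnion, Set.mem_setOf_eq]
      exact ⟨max N p.2, le_max_right _ _, hN _ (le_max_left _ _)⟩
  refine ⟨⋂ p, U p, dense_iInter_of_isOpen hopen hdense, IsGδ.iInter_of_isOpen hopen, ?_⟩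
  intro x hx
  rw [mapClusterPt_iff_frequently]
  intro t ht
  obtain ⟨ε, hε, hball⟩ := Metric.mem_nhds_iff.1 ht
  obtain ⟨m, hm⟩ := exists_nat_one_div_lt hε
  rw [Filter.frequently_atTop]
  intro N
  have hxU : x ∈ U (m, N) := Set.mem_iInter.1 hx (m, N)
  rw [hU] at hxU
  simp only [Set.mem_iUnion, Set.mem_setOf_eq] at hxU
  obtain ⟨n, hn1, hn2⟩ := hxU
  refine ⟨n, hn1, hball ?_⟩
  rw [Metric.mem_ball, Real.dist_eq]
  calc |s n x / (Nat.primeCounting n : ℝ) - 1/2| < 1/(m+1) := hn2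
    _ < ε := hm
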